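/- Let q be an odd prime, n ≥ 1 an integer, and a an integer coprime to q. Then (2/φ(q)) · ∑_{χ mod q, χ(-1) = -1} χ(a) τ(χ)^n = Kl_n(ā, q) - Kl_n(-ā, q), where Kl_n(b,q) = ∑_{x₁⋯x_n ≡ b mod q} e((x₁ + … + x_n)/q) is the hyper-Kloosterman sum, τ(χ) is the Gauss sum, and ā denotes the inverse of a mod q. -/

import Mathlib

open Complex Finset

/-- Gauss sum of a Dirichlet character mod `q`. -/
noncomputable def tau (q : ℕ) [NeZero q] (χ : DirichletCharacter ℂ q) : ℂ :=
  ∑ x : ZMod q, χ x * Complex.exp (2 * Real.pi * Complex.I * (x.val : ℂ) / (q : ℂ))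

/-- The hyper-Kloosterman sum `Kl_n(b, q)`. -/
noncomputable def Kloosterman (n q : ℕ) [NeZero q] (b : ZMod q) : ℂ :=
  ∑ x ∈ Finset.univ.filter (fun x : Fin n → ZMod q => ∏ i, x i = b),
    Complex.exp (2 * Real.pi * Complex.I * ((∑ i, (x i).val : ℕ) : ℂ) / (q : ℂ))

-- sum over odd characters
lemma odd_sum (q : ℕ) [NeZero q] (u : ZMod q) :
    ∑ χ ∈ Finset.univ.filter (fun χ : DirichletCharacter ℂ q => χ (-1) = -1), χ u
      = ((if u = 1 then (q.totient : ℂ) else 0) - (if u = -1 then (q.totient : ℂ) else 0)) / 2 := by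
  haveI : NeZero (Monoid.exponent (ZMod q)ˣ) := ⟨Monoid.exponent_ne_zero_of_finite⟩
  have key : ∑ χ : DirichletCharacter ℂ q, (χ u - χ (-u))
      = 2 * ∑ χ ∈ Finset.univ.filter (fun χ : DirichletCharacter ℂ q => χ (-1) = -1), χ u := by
    rw [← Finset.sum_filter_add_sum_filter_not Finset.univ
      (fun χ : DirichletCharacter ℂ q => χ (-1) = -1)]
    have h1 : ∑ χ ∈ Finset.univ.filter (fun χ : DirichletCharacter ℂ q => χ (-1) = -1),
        (χ u - χ (-u)) = ∑ χ ∈ Finset.univ.filter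
          (fun χ : DirichletCharacter ℂ q => χ (-1) = -1), 2 * χ u := by
      refine Finset.sum_congr rfl fun χ hχ => ?_
      rw [Finset.mem_filter] at hχ
      have : χ (-u) = - χ u := by
        have : (-u : ZMod q) = -1 * u := by ring
        rw [this, map_mul, hχ.2]; ring
      rw [this]; ring
    have h2 : ∑ χ ∈ Finset.univ.filter (fun χ : DirichletCharacter ℂ q => ¬ χ (-1) = -1),
        (χ u - χ (-u)) = 0 := by
      refine Finset.sum_eq_zero fun χ hχ => ?_
      rw [Finset.mem_filter] at hχ
      have hsq : χ (-1) * χ (-1) = 1 := by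
        rw [← map_mul]; norm_num
      have h1' : χ (-1) = 1 := by
        rcases mul_self_eq_one_iff.mp hsq with h | h
        · exact h
        · exact absurd h hχ.2
      have : χ (-u) = χ u := by
        have : (-u : ZMod q) = -1 * u := by ring
        rw [this, map_mul, h1']; ring
      rw [this]; ring
    rw [h1, h2, add_zero, Finset.mul_sum]
  have horth := fun v => DirichletCharacter.sum_characters_eq (R := ℂ) (n := q) v
  rw [Finset.sum_sub_distrib, horth u, horth (-u)] at key
  have hiff : (-u : ZMod q) = 1 ↔ u = -1 := neg_eq_iff_eq_neg
  rw [if_congr hiff rfl rfl] at key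
  rw [eq_div_iff (two_ne_zero' ℂ)]
  linear_combination -key

theorem odd_char_gauss_sum_moment (q : ℕ) (hq : q.Prime) (hq2 : Odd q)
    (n : ℕ) (hn : 1 ≤ n) (a : ℤ) (ha : IsCoprime a (q : ℤ)) :
    haveI : NeZero q := ⟨hq.ne_zero⟩
    (2 / (Nat.totient q : ℂ))
        * ∑ χ ∈ Finset.univ.filter
            (fun χ : DirichletCharacter ℂ q => χ (-1) = -1),
          χ ((a : ZMod q)) * (tau q χ) ^ n
      = Kloosterman n q ((a : ZMod q))⁻¹ - Kloosterman n q (-((a : ZMod q))⁻¹) := by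
  haveI : NeZero q := ⟨hq.ne_zero⟩
  haveI : Fact q.Prime := ⟨hq⟩
  -- a is nonzero mod q
  have hu : (a : ZMod q) ≠ 0 := by
    intro h
    rw [ZMod.intCast_zmod_eq_zero_iff_dvd] at h
    have h1 := Int.isUnit_iff.mp (ha.symm.isUnit_of_dvd' (dvd_refl _) h)
    have h2 := hq.one_lt
    rcases h1 with h1 | h1 <;> [skip; skip] <;> omega
  set c : ℂ := 2 * Real.pi * Complex.I with hc
  set E : (Fin n → ZMod q) → ℂ :=
    fun x => Complex.exp (c * ((∑ i, (x i).val : ℕ) : ℂ) / (q : ℂ)) with hE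
  have htau : ∀ χ : DirichletCharacter ℂ q,
      (tau q χ) ^ n = ∑ x : Fin n → ZMod q, χ (∏ i, x i) * E x := by
    intro χ
    have h1 : (tau q χ) ^ n = ∏ _i : Fin n, tau q χ := by
      rw [Finset.prod_const, Finset.card_univ, Fintype.card_fin]
    rw [h1, tau]
    rw [Finset.prod_univ_sum]
    rw [Fintype.piFinset_univ]
    refine Finset.sum_congr rfl fun x _ => ?_
    rw [Finset.prod_mul_distrib, ← map_prod]
    congr 1
    rw [← Complex.exp_sum]
    congr 1
    rw [Nat.cast_sum, ← Finset.sum_div, ← Finset.mul_sum]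
  have hmain : ∑ χ ∈ Finset.univ.filter
      (fun χ : DirichletCharacter ℂ q => χ (-1) = -1), χ ((a : ZMod q)) * (tau q χ) ^ n
      = ∑ x : Fin n → ZMod q,
          (∑ χ ∈ Finset.univ.filter (fun χ : DirichletCharacter ℂ q => χ (-1) = -1),
            χ ((a : ZMod q) * ∏ i, x i)) * E x := by
    simp_rw [htau, Finset.mul_sum]
    rw [Finset.sum_comm]
    refine Finset.sum_congr rfl fun x _ => ?_
    rw [Finset.sum_mul]
    refine Finset.sum_congr rfl fun χ _ => ?_
    rw [map_mul]; ring
  rw [hmain]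
  simp_rw [odd_sum]
  have hiff1 : ∀ p : ZMod q, (a : ZMod q) * p = 1 ↔ p = ((a : ZMod q))⁻¹ := by
    intro p
    constructor
    · intro h
      have := congrArg (fun z => ((a : ZMod q))⁻¹ * z) h
      simpa [← mul_assoc, inv_mul_cancel₀ hu] using this
    · rintro rfl; exact mul_inv_cancel₀ hu
  have hiff2 : ∀ p : ZMod q, (a : ZMod q) * p = -1 ↔ p = -((a : ZMod q))⁻¹ := by
    intro p
    constructor
    · intro h
      have h' : (a : ZMod q) * (-p) = 1 := by rw [mul_neg, h, neg_neg]
      have := (hiff1 (-p)).mp h'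
      exact neg_eq_iff_eq_neg.mp this
    · rintro rfl; rw [mul_neg, mul_inv_cancel₀ hu]
  simp_rw [hiff1, hiff2]
  have h2q : (2 : ZMod q) ≠ 0 := by
    intro h
    have h' : ((2 : ℕ) : ZMod q) = 0 := by exact_mod_cast h
    have hdvd : q ∣ 2 := (ZMod.natCast_eq_zero_iff 2 q).mp h'
    have := (Nat.prime_dvd_prime_iff_eq hq Nat.prime_two).mp hdvd
    rcases hq2 with ⟨k, hk⟩; omega
  have hne : ((a : ZMod q))⁻¹ ≠ -((a : ZMod q))⁻¹ := by
    intro h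
    have h2 : (2 : ZMod q) * ((a : ZMod q))⁻¹ = 0 := by linear_combination h
    rcases mul_eq_zero.mp h2 with h' | h'
    · exact h2q h'
    · exact inv_ne_zero hu h'
  have hne' : -((a : ZMod q))⁻¹ ≠ ((a : ZMod q))⁻¹ := fun h => hne h.symm
  have hsplit : ∑ x : Fin n → ZMod q,
      ((if ∏ i, x i = ((a : ZMod q))⁻¹ then (q.totient : ℂ) else 0)
        - (if ∏ i, x i = -((a : ZMod q))⁻¹ then (q.totient : ℂ) else 0)) / 2 * E x
      = (q.totient : ℂ) / 2 *
          (Kloosterman n q ((a : ZMod q))⁻¹ - Kloosterman n q (-((a : ZMod q))⁻¹)) := by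
    rw [Kloosterman, Kloosterman, mul_sub, Finset.mul_sum, Finset.mul_sum,
      Finset.sum_filter, Finset.sum_filter, ← Finset.sum_sub_distrib]
    refine Finset.sum_congr rfl fun x _ => ?_
    by_cases h1 : ∏ i, x i = ((a : ZMod q))⁻¹ <;>
      by_cases h2 : ∏ i, x i = -((a : ZMod q))⁻¹ <;>
      simp [h1, h2, hne, hne', E, hc] <;> ring_nf
  rw [hsplit]
  have hφ : ((q.totient : ℂ)) ≠ 0 := by
    simp only [ne_eq, Nat.cast_eq_zero]
    exact (Nat.totient_pos.mpr hq.pos).ne'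
  field_simp
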